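/- Size of views along the immediacy chain: for views satisfying Self-inclusion, Containment and Immediacy, if view_i ⊊ view_j then every index appearing in view_i has its view contained in view_i; consequently the number of processes whose view equals or is contained in a given view V is at least |V| restricted to indices appearing in V. In particular, the number of processes returning the minimum view is exactly its cardinality (among processes that return). -/
import Mathlib


/-- size of views along the immediacy chain. For any returned
view W, every process whose index appears in W and which returns has its view
contained in W; for the minimum view, such views equal `min_view`, and (when
all processes of Idx(min_view) return) the number of processes returning
`min_view` equals its cardinality. -/
theorem min_view_returner_count
    (n : ℕ) (Val : Type) [DecidableEq Val]
    (views : Fin n → Option (Finset (Fin n × Val)))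
    (hself : ∀ i vi, views i = some vi → ∃ v, (i, v) ∈ vi)
    (hcont : ∀ i j vi vj, views i = some vi → views j = some vj →
      vi ⊆ vj ∨ vj ⊆ vi)
    (himm : ∀ i j vi vj, views i = some vi → views j = some vj →
      (∃ v, (i, v) ∈ vj) → vi ⊆ vj)
    (minView : Finset (Fin n × Val))
    (hret : ∃ i₀, views i₀ = some minView)
    (hmin : ∀ i w, views i = some w → minView ⊆ w)
    (huniq : ∀ (w : Finset (Fin n × Val)) i v v',
      (∃ j, views j = some w) → (i, v) ∈ w → (i, v') ∈ w → v = v')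
    -- every process whose index appears in min_view returns a view
    (hall : ∀ i, (∃ v, (i, v) ∈ minView) → (views i).isSome) :
    (∀ (W : Finset (Fin n × Val)), (∃ j, views j = some W) →
       ∀ i, (∃ v, (i, v) ∈ W) → ∀ w, views i = some w → w ⊆ W) ∧
    (∀ i, (∃ v, (i, v) ∈ minView) → ∀ w, views i = some w → w = minView) ∧
    ((Finset.univ.filter fun i : Fin n => views i = some minView).card
        = minView.card) := by
  obtain ⟨i₀, hi₀⟩ := hret
  have part1 : ∀ (W : Finset (Fin n × Val)), (∃ j, views j = some W) →
      ∀ i, (∃ v, (i, v) ∈ W) → ∀ w, views i = some w → w ⊆ W := by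
    rintro W ⟨j, hj⟩ i hi w hw
    exact himm i j w W hw hj hi
  have part2 : ∀ i, (∃ v, (i, v) ∈ minView) → ∀ w, views i = some w →
      w = minView := by
    intro i hi w hw
    exact Finset.Subset.antisymm (part1 minView ⟨i₀, hi₀⟩ i hi w hw)
      (hmin i w hw)
  refine ⟨part1, part2, ?_⟩
  have hset : (Finset.univ.filter fun i : Fin n => views i = some minView)
      = minView.image Prod.fst := by
    ext i
    simp only [Finset.mem_filter, Finset.mem_univ, true_and, Finset.mem_image]
    constructor
    · intro h
      obtain ⟨v, hv⟩ := hself i minView h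
      exact ⟨(i, v), hv, rfl⟩
    · rintro ⟨⟨i', v⟩, hv, rfl⟩
      have h := hall i' ⟨v, hv⟩
      obtain ⟨w, hw⟩ := Option.isSome_iff_exists.mp h
      rw [hw, part2 i' ⟨v, hv⟩ w hw]
  rw [hset]
  apply Finset.card_image_of_injOn
  rintro ⟨i, v⟩ hv ⟨i', v'⟩ hv' (h : i = i')
  subst h
  have := huniq minView i v v' ⟨i₀, hi₀⟩ hv hv'
  rw [this]
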